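/- arXiv:1310.7014 — 3 statements merged into one kernel-verified Lean document; each statement's English description precedes it below -/
import Mathlib

section
/- Let K > 1 and μ > 0. Define b = μ² - 2Kμ(1 + √(1 - 1/K²)) and c = 4K²μ²√(1 - 1/K²). Then the quadratic X² + bX + c = 0 has two positive real roots X = ω±² if and only if μ < 2(K + √(K² - 1)) - 4√(K√(K² - 1)). -/
set_option maxHeartbeats 1000000


theorem stmt9 (K μ : ℝ) (hK : 1 < K) (hμ : 0 < μ) :
    (0 < (μ ^ 2 - 2 * K * μ * (1 + Real.sqrt (1 - 1 / K ^ 2))) ^ 2 -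
          4 * (4 * K ^ 2 * μ ^ 2 * Real.sqrt (1 - 1 / K ^ 2)) ∧
      0 < (-(μ ^ 2 - 2 * K * μ * (1 + Real.sqrt (1 - 1 / K ^ 2))) +
            Real.sqrt ((μ ^ 2 - 2 * K * μ * (1 + Real.sqrt (1 - 1 / K ^ 2))) ^ 2 -
              4 * (4 * K ^ 2 * μ ^ 2 * Real.sqrt (1 - 1 / K ^ 2)))) / 2 ∧
      0 < (-(μ ^ 2 - 2 * K * μ * (1 + Real.sqrt (1 - 1 / K ^ 2))) -
            Real.sqrt ((μ ^ 2 - 2 * K * μ * (1 + Real.sqrt (1 - 1 / K ^ 2))) ^ 2 -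
              4 * (4 * K ^ 2 * μ ^ 2 * Real.sqrt (1 - 1 / K ^ 2)))) / 2) ↔
    μ < 2 * (K + Real.sqrt (K ^ 2 - 1)) - 4 * Real.sqrt (K * Real.sqrt (K ^ 2 - 1)) := by
  have hK0 : (0:ℝ) < K := lt_trans one_pos hK
  have h1 : (0:ℝ) < 1 - 1 / K ^ 2 := by
    have h : 1 / K ^ 2 < 1 := by
      rw [div_lt_one (by positivity)]; nlinarith
    linarith
  set s := Real.sqrt (1 - 1 / K ^ 2) with hsdef
  have hs0 : 0 < s := Real.sqrt_pos.mpr h1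
  have hs2 : s ^ 2 = 1 - 1 / K ^ 2 := Real.sq_sqrt h1.le
  have hKs : Real.sqrt (K ^ 2 - 1) = K * s := by
    rw [show K ^ 2 - 1 = (K * s) ^ 2 by rw [mul_pow, hs2]; field_simp,
      Real.sqrt_sq (by positivity)]
  set T := Real.sqrt (K * Real.sqrt (K ^ 2 - 1)) with hTdef
  have hT0 : 0 < T := Real.sqrt_pos.mpr (by rw [hKs]; positivity)
  have hT2 : T ^ 2 = K ^ 2 * s := by
    rw [hTdef, Real.sq_sqrt (by rw [hKs]; positivity), hKs]; ring
  set b := μ ^ 2 - 2 * K * μ * (1 + s) with hb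
  set D := b ^ 2 - 4 * (4 * K ^ 2 * μ ^ 2 * s) with hDdef
  have hD : D = μ ^ 2 * ((2 * K * (1 + s) - μ) ^ 2 - (4 * T) ^ 2) := by
    rw [hDdef, hb]; linear_combination (16 * μ ^ 2) * hT2
  rw [hKs]
  constructor
  · rintro ⟨hDpos, -, h3⟩
    have hsq : Real.sqrt D < -b := by linarith
    have hbneg : b < 0 := by nlinarith [Real.sqrt_nonneg D]
    have hμA : μ < 2 * K * (1 + s) := by nlinarith
    have hDpos' := hDpos
    rw [hD] at hDpos'
    have hkey : (2 * K * (1 + s) - μ) ^ 2 > (4 * T) ^ 2 := by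
      nlinarith [sq_nonneg μ, hμ]
    nlinarith [hT0, hμA, hkey, mul_pos hT0 hT0]
  · intro h
    have hμA : μ < 2 * K * (1 + s) := by nlinarith
    have hbneg : b < 0 := by rw [hb]; nlinarith
    have hDpos : 0 < D := by
      rw [hD]
      have h4 : 0 < 2 * K * (1 + s) - μ - 4 * T := by linarith
      have h5 : 0 < 2 * K * (1 + s) - μ + 4 * T := by linarith
      nlinarith [mul_pos h4 h5, mul_pos hμ hμ, mul_pos (mul_pos hμ hμ) (mul_pos h4 h5)]
    have hc : 0 < 4 * (4 * K ^ 2 * μ ^ 2 * s) := by positivity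
    have hsq : Real.sqrt D < -b := by
      rw [Real.sqrt_lt' (by linarith : (0:ℝ) < -b)]
      nlinarith
    refine ⟨hDpos, by nlinarith [Real.sqrt_nonneg D], by linarith⟩
end

section
/- Let μ > 0, K > 0, N ≥ 2, and A ∈ ℝ with A = K cos(Ω̂τ). If the quartic ω⁴ + (μ² - 2μA)ω² + (N(N-2)/(N-1)²)μ²A² = 0 has a positive real root ω, then A ≥ 0 and μ ≤ 2A(1 - √(N(N-2))/(N-1)). -/
theorem stmt17 (μ K : ℝ) (N : ℕ) (A : ℝ) (hμ : 0 < μ) (hK : 0 < K)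
    (hN : 2 ≤ N) (ω : ℝ) (hω : 0 < ω)
    (heq : ω ^ 4 + (μ ^ 2 - 2 * μ * A) * ω ^ 2 +
      ((N : ℝ) * ((N : ℝ) - 2) / ((N : ℝ) - 1) ^ 2) * μ ^ 2 * A ^ 2 = 0) :
    0 ≤ A ∧
      μ ≤ 2 * A * (1 - Real.sqrt ((N : ℝ) * ((N : ℝ) - 2)) / ((N : ℝ) - 1)) := by
  set n : ℝ := (N : ℝ) with hn
  have hn2 : (2 : ℝ) ≤ n := by rw [hn]; exact_mod_cast hN
  have hn1 : (0 : ℝ) < n - 1 := by linarith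
  have hcnn : 0 ≤ n * (n - 2) := mul_nonneg (by linarith) (by linarith)
  have hne : (n - 1) ≠ 0 := ne_of_gt hn1
  have heq' : (ω ^ 4 + (μ ^ 2 - 2 * μ * A) * ω ^ 2) * (n - 1) ^ 2
      + n * (n - 2) * μ ^ 2 * A ^ 2 = 0 := by
    field_simp at heq
    nlinarith [heq, sq_nonneg (n - 1)]
  have hω2 : 0 < ω ^ 2 := by positivity
  have hω4 : 0 < ω ^ 4 := by positivity
  have hsq : 0 < (n - 1) ^ 2 := by positivity
  -- b < 0
  have hb : μ ^ 2 - 2 * μ * A < 0 := by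
    nlinarith [mul_nonneg hcnn (mul_nonneg (sq_nonneg μ) (sq_nonneg A)),
      mul_pos hω4 hsq, mul_pos hω2 hsq]
  have hμ2A : μ < 2 * A := by nlinarith
  have hA : 0 < A := by linarith
  -- discriminant times (n-1)^2
  have hkey : (2 * A - μ) ^ 2 * (n - 1) ^ 2 ≥ 4 * A ^ 2 * (n * (n - 2)) := by
    have h := sq_nonneg ((2 * ω ^ 2 + (μ ^ 2 - 2 * μ * A)) * (n - 1))
    nlinarith [h, heq', sq_nonneg μ, mul_pos hμ hμ]
  set s := Real.sqrt (n * (n - 2)) with hs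
  have hs2 : s ^ 2 = n * (n - 2) := Real.sq_sqrt hcnn
  have hsnn : 0 ≤ s := Real.sqrt_nonneg _
  have hfin : (2 * A - μ) * (n - 1) ≥ 2 * A * s := by
    nlinarith [mul_pos (by linarith : (0:ℝ) < 2 * A - μ) hn1,
      mul_nonneg (mul_nonneg (by norm_num : (0:ℝ) ≤ 2) hA.le) hsnn]
  refine ⟨hA.le, ?_⟩
  rw [ge_iff_le, ← sub_nonneg] at hfin
  rw [← sub_nonneg]
  have heq2 : 2 * A * (1 - s / (n - 1)) - μ = ((2 * A - μ) * (n - 1) - 2 * A * s) / (n - 1) := by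
    field_simp; ring
  rw [heq2]
  positivity
end

section
/- Let μ, K, ω_M, τ > 0 and C ∈ ℝ. Suppose θ: ℝ → ℝ satisfies the ODE θ''(t) + μθ'(t) + Kμ sin(C + ω_M τ) = 0 and additionally θ(t) - θ(t - τ) = C for all t. Then θ(t) = -K sin(C + ω_M τ)·t + C₁ for some constant C₁, and C satisfies C = -Kτ sin(C + ω_M τ). -/
theorem stmt19 (μ K ωM τ C : ℝ) (hμ : 0 < μ) (hK : 0 < K) (hω : 0 < ωM)
    (hτ : 0 < τ) (θ : ℝ → ℝ) (hθ : ContDiff ℝ 2 θ)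
    (hode : ∀ t, deriv (deriv θ) t + μ * deriv θ t +
      K * μ * Real.sin (C + ωM * τ) = 0)
    (hdelay : ∀ t, θ t - θ (t - τ) = C) :
    (∃ C₁ : ℝ, ∀ t, θ t = -K * Real.sin (C + ωM * τ) * t + C₁) ∧
      C = -K * τ * Real.sin (C + ωM * τ) := by
  set s : ℝ := Real.sin (C + ωM * τ) with hs
  set v : ℝ → ℝ := deriv θ with hv
  have hθdiff : Differentiable ℝ θ := hθ.differentiable two_ne_zero
  have hθ' : ContDiff ℝ 1 (deriv θ) := by
    have := (contDiff_succ_iff_deriv.mp (show ContDiff ℝ (1 + 1) θ by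
      norm_num; exact hθ)).2
    exact this.2
  have hvdiff : Differentiable ℝ v := hθ'.differentiable one_ne_zero
  have hvd : ∀ t, HasDerivAt θ (v t) t := fun t => (hθdiff t).hasDerivAt
  have hv'd : ∀ t, HasDerivAt v (deriv v t) t := fun t => (hvdiff t).hasDerivAt
  -- derivative of f t = exp(μ t) (v t + K s) is zero
  set f : ℝ → ℝ := fun t => Real.exp (μ * t) * (v t + K * s) with hf
  have hfd : ∀ t, HasDerivAt f 0 t := by
    intro t
    have h1 : HasDerivAt (fun t => Real.exp (μ * t)) (Real.exp (μ * t) * μ) t := by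
      simpa [Function.comp_def] using (Real.hasDerivAt_exp (μ * t)).comp t
        ((hasDerivAt_id t).const_mul μ)
    have h2 : HasDerivAt (fun t => v t + K * s) (deriv v t) t :=
      (hv'd t).add_const _
    have := h1.mul h2
    have hode' : deriv v t = -(μ * v t + K * μ * s) := by
      have := hode t; rw [hv]; linarith
    refine this.congr_deriv ?_
    rw [hode']; ring
  have hfconst : ∀ t, f t = f 0 := by
    intro t
    exact is_const_of_deriv_eq_zero (fun x => (hfd x).differentiableAt)
      (fun x => (hfd x).deriv) t 0
  -- v t = v (t - τ)
  have hvdelay : ∀ t, v t = v (t - τ) := by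
    intro t
    have hconst : (fun t => θ t - θ (t - τ)) = fun _ => C := funext hdelay
    have h1 : HasDerivAt (fun t => θ t - θ (t - τ)) (v t - v (t - τ)) t := by
      have h2 : HasDerivAt (fun t => θ (t - τ)) (v (t - τ)) t := by
        simpa [Function.comp_def] using (hvd (t - τ)).comp t ((hasDerivAt_id t).sub_const τ)
      exact (hvd t).sub h2
    have h0 : HasDerivAt (fun _ : ℝ => C) (v t - v (t - τ)) t := hconst ▸ h1
    have := h0.deriv
    rw [deriv_const] at this
    linarith
  -- v 0 + K s = 0
  have hA : v 0 + K * s = 0 := by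
    have h1 := hfconst (-τ)
    have h2 := hvdelay 0
    simp only [hf] at h1
    rw [zero_sub] at h2
    rw [← h2] at h1
    simp only [mul_zero, Real.exp_zero, one_mul] at h1
    have hne : Real.exp (μ * -τ) ≠ 1 := by
      intro h
      rw [Real.exp_eq_one_iff] at h
      nlinarith
    -- h1 : exp (μ * -τ) * (v 0 + K s) = v 0 + K s
    have hx : (Real.exp (μ * -τ) - 1) * (v 0 + K * s) = 0 := by nlinarith [h1]
    rcases mul_eq_zero.mp hx with h | h
    · exact absurd (by linarith : Real.exp (μ * -τ) = 1) hne
    · exact h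
  have hvconst : ∀ t, v t = -K * s := by
    intro t
    have h1 := hfconst t
    simp only [hf, mul_zero, Real.exp_zero, one_mul, hA, mul_zero] at h1
    have := Real.exp_ne_zero (μ * t)
    have h2 : v t + K * s = 0 := by
      rcases mul_eq_zero.mp h1 with h | h
      · exact absurd h this
      · exact h
    linarith
  -- θ t = -K s t + θ 0
  have hmain : ∀ t, θ t = -K * s * t + θ 0 := by
    intro t
    set g : ℝ → ℝ := fun t => θ t + K * s * t with hg
    have hgd : ∀ x, HasDerivAt g 0 x := by
      intro x
      have := (hvd x).add ((hasDerivAt_id x).const_mul (K * s))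
      simpa [hvconst x, hg, Pi.add_def] using this
    have := is_const_of_deriv_eq_zero (fun x => (hgd x).differentiableAt)
      (fun x => (hgd x).deriv) t 0
    simp only [hg] at this
    linarith [this]
  refine ⟨⟨θ 0, hmain⟩, ?_⟩
  have := hdelay τ
  rw [hmain τ, hmain (τ - τ)] at this
  ring_nf at this ⊢
  linarith
end
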